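/- There exist finite constants γ_1 ≤ γ_2 such that for every n ∈ ℕ and every x ∈ [0, 3^n]: γ_1 ≤ Σ_{j=1}^{n} e^{-x/3^j} − ( n − ln(x+1)/ln 3 ) ≤ γ_2. -/

import Mathlib

open Real

lemma geom_third_le (N : ℕ) : ∑ k ∈ Finset.range N, (1/3:ℝ)^k ≤ 3/2 := by
  have h := Summable.sum_le_tsum (Finset.range N)
    (fun i _ => by positivity : ∀ i ∉ (Finset.range N), (0:ℝ) ≤ (1/3:ℝ)^i)
    (summable_geometric_of_lt_one (by norm_num) (by norm_num))
  rw [tsum_geometric_of_lt_one (by norm_num) (by norm_num)] at h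
  norm_num at h
  linarith

lemma pow_div_third (a b : ℕ) (h : a ≤ b) : (3:ℝ)^a / 3^b = (1/3)^(b-a) := by
  have h1 : (3:ℝ)^b = 3^(b-a) * 3^a := by rw [← pow_add]; congr 1; omega
  rw [div_eq_iff (by positivity : ((3:ℝ)^b) ≠ 0), h1, one_div, inv_pow,
    ← mul_assoc, inv_mul_cancel₀ (by positivity), one_mul]

lemma tail_geom (m n : ℕ) : ∑ j ∈ Finset.Ioc m n, (1/3:ℝ)^(j-(m+1)) ≤ 3/2 := by
  rw [← Finset.Icc_add_one_left_eq_Ioc, ← Finset.Ico_add_one_right_eq_Icc, Finset.sum_Ico_eq_sum_range]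
  have e : ∀ k : ℕ, ((1:ℝ)/3)^(m + 1 + k - (m+1)) = (1/3:ℝ)^k := by
    intro k; congr 1; omega
  rw [Finset.sum_congr rfl fun k _ => e k]
  exact geom_third_le _

lemma head_geom (m : ℕ) : ∑ j ∈ Finset.Ioc 0 m, (1/3:ℝ)^(m-j) ≤ 3/2 := by
  rw [← Finset.Icc_add_one_left_eq_Ioc, ← Finset.Ico_add_one_right_eq_Icc, Finset.sum_Ico_eq_sum_range]
  have e : ∀ k : ℕ, ((1:ℝ)/3)^(m - (0 + 1 + k)) = (1/3:ℝ)^(m - 1 - k) := by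
    intro k; congr 1; omega
  rw [Finset.sum_congr rfl fun k _ => e k]
  have e2 : m + 1 - (0 + 1) = m := by omega
  rw [e2, Finset.sum_range_reflect (fun k => (1/3:ℝ)^k) m]
  exact geom_third_le _

/-- There exist finite constants `γ₁ ≤ γ₂` such that for every `n` and every
`x ∈ [0, 3ⁿ]`:
`γ₁ ≤ Σ_{j=1}^{n} e^{-x/3ʲ} − (n − ln(x+1)/ln 3) ≤ γ₂`. -/
theorem cantor_exponential_sum_estimate :
    ∃ γ₁ γ₂ : ℝ, γ₁ ≤ γ₂ ∧
      ∀ n : ℕ, ∀ x : ℝ, 0 ≤ x → x ≤ 3 ^ n →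
        γ₁ ≤ (∑ j ∈ Finset.Icc 1 n, Real.exp (-(x / 3 ^ j))) -
            ((n : ℝ) - Real.log (x + 1) / Real.log 3) ∧
          (∑ j ∈ Finset.Icc 1 n, Real.exp (-(x / 3 ^ j))) -
            ((n : ℝ) - Real.log (x + 1) / Real.log 3) ≤ γ₂ := by
  refine ⟨-(3/2), 7/2, by norm_num, ?_⟩
  intro n x hx hxn
  have hlog3 : 0 < Real.log 3 := Real.log_pos (by norm_num)
  set M := Nat.log 3 ⌊x⌋₊ with hM
  set m := min n M with hm
  have hmn : m ≤ n := min_le_left _ _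
  have hmM : m ≤ M := min_le_right _ _
  -- x ≤ 3^(m+1)
  have hx1 : x ≤ 3 ^ (m + 1) := by
    rcases le_or_gt M n with h | h
    · have hmM' : m = M := by omega
      have h1 : ⌊x⌋₊ < 3 ^ (M + 1) := Nat.lt_pow_succ_log_self (by norm_num) _
      have h2 : x < (⌊x⌋₊ : ℝ) + 1 := Nat.lt_floor_add_one x
      have h3 : ((⌊x⌋₊ : ℝ) + 1) ≤ (3:ℝ) ^ (M+1) := by
        have := Nat.succ_le_of_lt h1
        exact_mod_cast this
      rw [hmM']; linarith
    · have hmn' : m = n := by omega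
      calc x ≤ 3^n := hxn
        _ ≤ 3^(m+1) := by
            rw [hmn']
            exact pow_le_pow_right₀ (by norm_num) (Nat.le_succ n)
  -- 3^m ≤ x when m ≥ 1
  have hx2 : 1 ≤ m → (3:ℝ)^m ≤ x := by
    intro h1
    have hM1 : 1 ≤ M := le_trans h1 hmM
    have hf : ⌊x⌋₊ ≠ 0 := by
      intro h0
      rw [hM, h0] at hM1
      simp [Nat.log_zero_right] at hM1
    have h2 : 3 ^ M ≤ ⌊x⌋₊ := Nat.pow_log_le_self 3 hf
    have h3 : ((3:ℕ)^M : ℝ) ≤ (⌊x⌋₊ : ℝ) := by exact_mod_cast h2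
    have h4 : (⌊x⌋₊ : ℝ) ≤ x := Nat.floor_le hx
    have h5 : (3:ℝ)^m ≤ 3^M := pow_le_pow_right₀ (by norm_num) hmM
    push_cast at h3
    linarith
  -- log bounds
  have hL1 : Real.log (x+1) / Real.log 3 ≤ (m:ℝ) + 2 := by
    have hpow : (3:ℝ)^(m+2) = 3 * 3^(m+1) := by rw [pow_succ]; ring
    have hp1 : (1:ℝ) ≤ 3^(m+1) := by simpa using pow_le_pow_right₀ (by norm_num : (1:ℝ) ≤ 3) (Nat.zero_le (m+1))
    have hbd : x + 1 ≤ 3^(m+2) := by rw [hpow]; linarith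
    have hlog := Real.log_le_log (by linarith) hbd
    rw [Real.log_pow] at hlog
    rw [div_le_iff₀ hlog3]
    push_cast at hlog ⊢
    linarith
  have hL2 : (m:ℝ) ≤ Real.log (x+1) / Real.log 3 := by
    rcases Nat.eq_zero_or_pos m with h0 | h1
    · rw [h0]
      push_cast
      have : 0 ≤ Real.log (x+1) := Real.log_nonneg (by linarith)
      positivity
    · have h2 := hx2 h1
      have hbd : (3:ℝ)^m ≤ x + 1 := by linarith
      have hlog := Real.log_le_log (by positivity) hbd
      rw [Real.log_pow] at hlog
      rw [le_div_iff₀ hlog3]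
      push_cast at hlog ⊢
      linarith
  -- split the sum
  have hsplit : ∑ j ∈ Finset.Icc 1 n, Real.exp (-(x / 3 ^ j)) =
      (∑ j ∈ Finset.Ioc 0 m, Real.exp (-(x / 3 ^ j))) +
      ∑ j ∈ Finset.Ioc m n, Real.exp (-(x / 3 ^ j)) := by
    have h01 : Finset.Icc 1 n = Finset.Ioc 0 n := Finset.Icc_add_one_left_eq_Ioc 0 n
    rw [h01, ← Finset.sum_Ioc_consecutive _ (Nat.zero_le m) hmn]
  set A := ∑ j ∈ Finset.Ioc 0 m, Real.exp (-(x / 3 ^ j)) with hA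
  set B := ∑ j ∈ Finset.Ioc m n, Real.exp (-(x / 3 ^ j)) with hB
  have hcard : ((Finset.Ioc m n).card : ℝ) = (n:ℝ) - m := by
    rw [Nat.card_Ioc, Nat.cast_sub hmn]
  have hA0 : 0 ≤ A := Finset.sum_nonneg fun j _ => (Real.exp_pos _).le
  have hAle : A ≤ 3/2 := by
    rcases Nat.eq_zero_or_pos m with h0 | h1
    · rw [hA, h0]; norm_num [Finset.Ioc_self]
    · have hxm := hx2 h1
      calc A ≤ ∑ j ∈ Finset.Ioc 0 m, (1/3:ℝ)^(m-j) := by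
              apply Finset.sum_le_sum
              intro j hj
              rw [Finset.mem_Ioc] at hj
              have hj3 : (0:ℝ) < 3^j := by positivity
              have hpe : (3:ℝ)^(m-j) * 3^j = 3^m := by
                rw [← pow_add]; congr 1; omega
              have ht : (3:ℝ)^(m-j) ≤ x / 3^j := by
                rw [le_div_iff₀ hj3, hpe]; exact hxm
              have ht0 : (0:ℝ) < 3^(m-j) := by positivity
              have htpos : 0 < x / 3^j := lt_of_lt_of_le ht0 ht
              have he1 : Real.exp (-(x/3^j)) = (Real.exp (x/3^j))⁻¹ := Real.exp_neg _
              have he2 : (Real.exp (x/3^j))⁻¹ ≤ (x/3^j)⁻¹ :=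
                inv_anti₀ htpos (by linarith [Real.add_one_le_exp (x/3^j)])
              have he3 : (x/3^j)⁻¹ ≤ ((3:ℝ)^(m-j))⁻¹ := inv_anti₀ ht0 ht
              have he4 : ((3:ℝ)^(m-j))⁻¹ = (1/3:ℝ)^(m-j) := by
                rw [one_div, inv_pow]
              rw [he1, ← he4]
              exact le_trans he2 he3
        _ ≤ 3/2 := head_geom m
  have hBle : B ≤ (n:ℝ) - m := by
    calc B ≤ ∑ j ∈ Finset.Ioc m n, (1:ℝ) := by
            apply Finset.sum_le_sum
            intro j hj
            have h0 : (0:ℝ) ≤ x / 3^j := by positivity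
            calc Real.exp (-(x/3^j)) ≤ Real.exp 0 :=
                  Real.exp_le_exp.mpr (by linarith)
              _ = 1 := Real.exp_zero
      _ = ((Finset.Ioc m n).card : ℝ) := by
            rw [Finset.sum_const, nsmul_eq_mul, mul_one]
      _ = (n:ℝ) - m := hcard
  have hBge : (n:ℝ) - m - 3/2 ≤ B := by
    have hsum : ∑ j ∈ Finset.Ioc m n, (1 - Real.exp (-(x/3^j))) ≤ 3/2 := by
      calc ∑ j ∈ Finset.Ioc m n, (1 - Real.exp (-(x/3^j)))
          ≤ ∑ j ∈ Finset.Ioc m n, (1/3:ℝ)^(j-(m+1)) := by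
            apply Finset.sum_le_sum
            intro j hj
            rw [Finset.mem_Ioc] at hj
            have hj1 : m + 1 ≤ j := hj.1
            have hj3 : (0:ℝ) < 3^j := by positivity
            have h1 : 1 - Real.exp (-(x/3^j)) ≤ x/3^j := by
              have := Real.add_one_le_exp (-(x/3^j)); linarith
            have h2 : x/3^j ≤ (1/3:ℝ)^(j-(m+1)) := by
              rw [← pow_div_third (m+1) j hj1]
              exact (div_le_div_iff_of_pos_right hj3).mpr hx1
            linarith
        _ ≤ 3/2 := tail_geom m n
    have hexpand : ∑ j ∈ Finset.Ioc m n, (1 - Real.exp (-(x/3^j))) =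
        ((Finset.Ioc m n).card : ℝ) - B := by
      rw [Finset.sum_sub_distrib, Finset.sum_const, nsmul_eq_mul, mul_one]
    rw [hexpand, hcard] at hsum
    linarith
  rw [hsplit]
  constructor <;> linarith
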